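/- Assume κ is UD-self-dual and 𝗊 : P → ℝ_{>0} is such that 𝗊² satisfies the Kerov condition with a parameter t > 0. Then for every μ ∈ 𝔾, every n ≥ 0 and every λ ∈ 𝔾_n: (T_n P*_μ)(λ) − P*_μ(λ) = −(|μ|(|μ|−1+t)/((n+1)(n+t))) · P*_μ(λ) + ((n+1−|μ|)/((n+1)(n+t))) · Σ_{ρ : ρ ↗ μ} κ(ρ,μ) 𝗊(μ∖ρ)² P*_ρ(λ), where (T_n f)(λ) = Σ_{λ̃∈𝔾_n} T_n(λ,λ̃) f(λ̃) and P*_μ is restricted to 𝔾_n. -/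

import Mathlib

open scoped BigOperators Classical

namespace IdealGraph

variable {P : Type*} [PartialOrder P]

/-- A finite order ideal of the poset `P`, encoded as a down-closed `Finset`. -/
def IsIdealF (s : Finset P) : Prop := ∀ ⦃x⦄, x ∈ s → ∀ ⦃y⦄, y ≤ x → y ∈ s

/-- The vertex set of the branching graph of ideals `𝔾 = J(P)`. -/
abbrev G (P : Type*) [PartialOrder P] := {s : Finset P // IsIdealF s}

/-- The `n`-th level `𝔾_n` of the branching graph. -/
abbrev Lvl (P : Type*) [PartialOrder P] (n : ℕ) := {s : Finset P // IsIdealF s ∧ s.card = n}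

/-- `CoversF μ l` : `μ ↗ l` is an edge of the branching graph of ideals. -/
def CoversF (μ l : Finset P) : Prop :=
  IsIdealF μ ∧ IsIdealF l ∧ μ ⊆ l ∧ l.card = μ.card + 1

/-- All levels `𝔾_n` of the graph are finite. -/
def LevelsFinite (P : Type*) [PartialOrder P] : Prop :=
  ∀ n : ℕ, {s : Finset P | IsIdealF s ∧ s.card = n}.Finite

/-- An edge multiplicity function is (strictly) positive on all edges. -/
def EdgePositive (κ : Finset P → Finset P → ℝ) : Prop :=
  ∀ μ l, CoversF μ l → 0 < κ μ l

/-- UD-self-duality of a multiplicity function: for every quadrangle `μ ρ ν λ`. -/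
def UDSelfDual (κ : Finset P → Finset P → ℝ) : Prop :=
  ∀ μ ρ l ν : Finset P, CoversF μ ρ → CoversF ρ ν → CoversF μ l → CoversF l ν →
    ρ ≠ l → κ μ l * κ μ ρ = κ l ν * κ ρ ν

/-- The value of a function `q : P → R` on the box `l ∖ μ` of an edge `μ ↗ l`. -/
noncomputable def bx {R : Type*} [AddCommMonoid R] (q : P → R) (μ l : Finset P) : R :=
  ∑ x ∈ l \ μ, q x

/-- The Kerov condition with parameter `t` for the function `q2 = 𝗊²`. -/
def KerovCond (κ : Finset P → Finset P → ℝ) (q2 : P → ℂ) (t : ℂ) : Prop :=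
  ∀ l : Finset P, IsIdealF l →
    (∑' ν : {ν : Finset P // CoversF l ν}, (κ l ν.1 : ℂ) ^ 2 * bx q2 l ν.1) -
      (∑' μ : {μ : Finset P // CoversF μ l}, (κ μ.1 l : ℂ) ^ 2 * bx q2 μ.1 l)
      = 2 * (l.card : ℂ) + t

/-- Weighted number of saturated chains of length `n` from the ideal `μ` up to the ideal `l`. -/
noncomputable def dimRel (κ : Finset P → Finset P → ℝ) : ℕ → Finset P → Finset P → ℝ
  | 0, μ, l => if μ = l then 1 else 0
  | n + 1, μ, l =>
      ∑ x ∈ l, if CoversF (l.erase x) l ∧ μ ⊆ l.erase x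
        then κ (l.erase x) l * dimRel κ n μ (l.erase x) else 0

/-- Relative dimension `dim(μ, l)`. -/
noncomputable def dimI (κ : Finset P → Finset P → ℝ) (μ l : Finset P) : ℝ :=
  dimRel κ (l.card - μ.card) μ l

/-- Dimension `dim l = dim(∅, l)`. -/
noncomputable def dimT (κ : Finset P → Finset P → ℝ) (l : Finset P) : ℝ :=
  dimI κ ∅ l

/-- The relative dimension function `P*_μ`. -/
noncomputable def Pstar (κ : Finset P → Finset P → ℝ) (μ l : Finset P) : ℝ :=
  (l.card.descFactorial μ.card : ℝ) * dimI κ μ l / dimT κ l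

/-- The mixed measure `M_ξ`. -/
noncomputable def Mxi (κ : Finset P → Finset P → ℝ) (q : P → ℝ) (t ξ : ℝ) (l : Finset P) : ℝ :=
  (1 - ξ) ^ t * ξ ^ l.card * (dimT κ l / (Nat.factorial l.card : ℝ)) ^ 2 * ∏ x ∈ l, q x ^ 2

/-- The coherent measure `M_n(l)` (for `n = |l|`). -/
noncomputable def Mcoh (κ : Finset P → Finset P → ℝ) (q : P → ℝ) (t : ℝ) (l : Finset P) : ℝ :=
  dimT κ l ^ 2 * (∏ x ∈ l, q x ^ 2) /
    ((Nat.factorial l.card : ℝ) * Polynomial.eval t (ascPochhammer ℝ l.card))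

/-- The jump rates `Q(l, ρ)` of the Markov jump dynamics. -/
noncomputable def Qrate (κ : Finset P → Finset P → ℝ) (q : P → ℝ) (t ξ : ℝ)
    (l ρ : Finset P) : ℝ :=
  if CoversF ρ l then (1 - ξ)⁻¹ * l.card * (κ ρ l * dimT κ ρ / dimT κ l)
  else if CoversF l ρ then
    (1 - ξ)⁻¹ * (ξ * ((l.card : ℝ) + t)) *
      ((Mcoh κ q t ρ / Mcoh κ q t l) * (κ l ρ * dimT κ l / dimT κ ρ))
  else if ρ = l then -((1 - ξ)⁻¹ * ((l.card : ℝ) + ξ * ((l.card : ℝ) + t)))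
  else 0

/-- The function `𝔐_l`. -/
noncomputable def Mfrak (κ : Finset P → Finset P → ℝ) (q : P → ℝ) (ξ : ℝ)
    (l ν : Finset P) : ℝ :=
  ∑ μ ∈ l.powerset.filter (fun s => IsIdealF s),
    (ξ / (ξ - 1)) ^ (l.card - μ.card) *
      (dimI κ μ l / (Nat.factorial (l.card - μ.card) : ℝ)) *
      (∏ x ∈ l \ μ, q x ^ 2) * Pstar κ μ ν

/-- The operator `U` built from `κ` and `q`. -/
noncomputable def Uop (κ : Finset P → Finset P → ℝ) (q : P → ℂ) (f : Finset P → ℂ) :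
    Finset P → ℂ :=
  fun l => ∑' μ : {μ : Finset P // CoversF μ l}, (κ μ.1 l : ℂ) * bx q μ.1 l * f μ.1

/-- The operator `D` built from `κ` and `q`. -/
noncomputable def Dop (κ : Finset P → Finset P → ℝ) (q : P → ℂ) (f : Finset P → ℂ) :
    Finset P → ℂ :=
  fun l => ∑' ν : {ν : Finset P // CoversF l ν}, (κ l ν.1 : ℂ) * bx q l ν.1 * f ν.1

/-- The standard basis vector `δ_l`. -/
noncomputable def delta (l : Finset P) : Finset P → ℂ := fun ρ => if ρ = l then 1 else 0


/-- Down transition probability `p↓(ν, μ)`. -/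
noncomputable def pDown {P : Type*} [PartialOrder P]
    (κ : Finset P → Finset P → ℝ) (ν μ : Finset P) : ℝ :=
  if CoversF μ ν then κ μ ν * dimT κ μ / dimT κ ν else 0

/-- Up transition probability `p↑(l, ν)`. -/
noncomputable def pUp {P : Type*} [PartialOrder P]
    (κ : Finset P → Finset P → ℝ) (q : P → ℝ) (t : ℝ) (l ν : Finset P) : ℝ :=
  if CoversF l ν then (Mcoh κ q t ν / Mcoh κ q t l) * (κ l ν * dimT κ l / dimT κ ν) else 0

/-- The up/down transition matrix `T_n(l, l')` (for `n = |l|`). -/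
noncomputable def TnMat {P : Type*} [PartialOrder P]
    (κ : Finset P → Finset P → ℝ) (q : P → ℝ) (t : ℝ) (l l' : Finset P) : ℝ :=
  ∑' ν : Lvl P (l.card + 1), pUp κ q t l ν.1 * pDown κ ν.1 l'

section Aux1

variable {P : Type*} [PartialOrder P]

lemma covers_box {μ l : Finset P} (h : CoversF μ l) :
    ∃ x, x ∉ μ ∧ l = insert x μ ∧ l \ μ = {x} := by
  obtain ⟨hμ, hl, hsub, hcard⟩ := h
  have h1 : (l \ μ).card = 1 := by
    rw [Finset.card_sdiff_of_subset hsub, hcard]; omega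
  obtain ⟨x, hx⟩ := Finset.card_eq_one.mp h1
  refine ⟨x, ?_, ?_, hx⟩
  · have : x ∈ l \ μ := hx ▸ Finset.mem_singleton_self x
    exact (Finset.mem_sdiff.mp this).2
  · apply Finset.Subset.antisymm
    · intro y hy
      by_cases hyμ : y ∈ μ
      · exact Finset.mem_insert_of_mem hyμ
      · have : y ∈ l \ μ := Finset.mem_sdiff.mpr ⟨hy, hyμ⟩
        rw [hx, Finset.mem_singleton] at this
        exact this ▸ Finset.mem_insert_self x μ
    · intro y hy
      rcases Finset.mem_insert.mp hy with rfl | hyμ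
      · have : y ∈ l \ μ := hx ▸ Finset.mem_singleton_self y
        exact (Finset.mem_sdiff.mp this).1
      · exact hsub hyμ

lemma bx_covers {M : Type*} [AddCommMonoid M] (q : P → M) {μ l : Finset P} {x : P}
    (hx : l \ μ = {x}) : bx q μ l = q x := by
  rw [bx, hx, Finset.sum_singleton]

lemma ideal_union {s t : Finset P} (hs : IsIdealF s) (ht : IsIdealF t) :
    IsIdealF (s ∪ t) := by
  intro x hx y hy
  rcases Finset.mem_union.mp hx with h | h
  · exact Finset.mem_union_left _ (hs h hy)
  · exact Finset.mem_union_right _ (ht h hy)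

lemma ideal_inter {s t : Finset P} (hs : IsIdealF s) (ht : IsIdealF t) :
    IsIdealF (s ∩ t) := by
  intro x hx y hy
  have := Finset.mem_inter.mp hx
  exact Finset.mem_inter.mpr ⟨hs this.1 hy, ht this.2 hy⟩

lemma quad_down {l l' ν : Finset P} (h1 : CoversF l ν) (h2 : CoversF l' ν) (hne : l ≠ l') :
    CoversF (l ∩ l') l ∧ CoversF (l ∩ l') l' ∧ ν \ l = l' \ (l ∩ l') ∧ ν = l ∪ l' := by
  have hcard : l.card = l'.card := by
    have := h1.2.2.2; have := h2.2.2.2; omega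
  have huv : l ∪ l' = ν := by
    have hssub : l ⊂ l ∪ l' := by
      refine Finset.ssubset_iff_subset_ne.mpr ⟨Finset.subset_union_left, fun h => ?_⟩
      have hsub' : l' ⊆ l := by rw [h]; exact Finset.subset_union_right
      exact hne (Finset.eq_of_subset_of_card_le hsub' hcard.le).symm
    apply Finset.eq_of_subset_of_card_le
    · exact Finset.union_subset h1.2.2.1 h2.2.2.1
    · have := Finset.card_lt_card hssub
      have := h1.2.2.2
      omega
  have hint : (l ∩ l').card + 1 = l.card := by
    have := Finset.card_union_add_card_inter l l'
    rw [huv] at this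
    have := h1.2.2.2
    omega
  have hideal : IsIdealF (l ∩ l') := ideal_inter h1.1 h2.1
  refine ⟨⟨hideal, h1.1, Finset.inter_subset_left, hint.symm⟩,
    ⟨hideal, h2.1, Finset.inter_subset_right, by rw [hcard] at hint; exact hint.symm⟩, ?_, huv.symm⟩
  rw [← huv]
  ext y
  simp only [Finset.mem_sdiff, Finset.mem_union, Finset.mem_inter]
  tauto

lemma quad_up {μ0 l l' : Finset P} (h1 : CoversF μ0 l) (h2 : CoversF μ0 l') (hne : l ≠ l') :
    CoversF l (l ∪ l') ∧ CoversF l' (l ∪ l') ∧ (l ∪ l') \ l = l' \ μ0 ∧ l ∩ l' = μ0 := by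
  have hcard : l.card = l'.card := by
    have := h1.2.2.2; have := h2.2.2.2; omega
  have hint : l ∩ l' = μ0 := by
    apply Finset.Subset.antisymm
    · by_contra hcon
      have hsub : μ0 ⊆ l ∩ l' := Finset.subset_inter h1.2.2.1 h2.2.2.1
      have hlt : μ0.card < (l ∩ l').card := Finset.card_lt_card
        (Finset.ssubset_iff_subset_ne.mpr ⟨hsub, fun h => hcon (h ▸ Finset.Subset.refl _)⟩)
      have hle : (l ∩ l').card ≤ l.card := Finset.card_le_card Finset.inter_subset_left
      have heq : l ∩ l' = l := Finset.eq_of_subset_of_card_le Finset.inter_subset_left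
        (by have := h1.2.2.2; omega)
      have : l ⊆ l' := heq ▸ Finset.inter_subset_right
      exact hne (Finset.eq_of_subset_of_card_le this hcard.ge)
    · exact Finset.subset_inter h1.2.2.1 h2.2.2.1
  have hucard : (l ∪ l').card = l.card + 1 := by
    have := Finset.card_union_add_card_inter l l'
    rw [hint] at this
    have := h1.2.2.2; have := h2.2.2.2
    omega
  have hui : IsIdealF (l ∪ l') := ideal_union h1.2.1 h2.2.1
  refine ⟨⟨h1.2.1, hui, Finset.subset_union_left, hucard⟩,
    ⟨h2.2.1, hui, Finset.subset_union_right, by rw [hcard] at hucard; exact hucard⟩, ?_, hint⟩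
  rw [← hint]
  ext y
  simp only [Finset.mem_sdiff, Finset.mem_union, Finset.mem_inter]
  tauto

end Aux1
section Aux2

variable {P : Type*} [PartialOrder P]

/-- Finset of down covers. -/
noncomputable def dcovF (l : Finset P) : Finset (Finset P) :=
  l.powerset.filter (fun ρ => CoversF ρ l)

/-- Finset of a level. -/
noncomputable def lvlF (hLF : LevelsFinite P) (n : ℕ) : Finset (Finset P) :=
  (hLF n).toFinset

/-- Finset of up covers. -/
noncomputable def ucovF (hLF : LevelsFinite P) (l : Finset P) : Finset (Finset P) :=
  (lvlF hLF (l.card + 1)).filter (fun ν => CoversF l ν)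

@[simp] lemma mem_dcovF {l ρ : Finset P} : ρ ∈ dcovF l ↔ CoversF ρ l := by
  simp only [dcovF, Finset.mem_filter, Finset.mem_powerset]
  exact ⟨fun h => h.2, fun h => ⟨h.2.2.1, h⟩⟩

@[simp] lemma mem_lvlF {hLF : LevelsFinite P} {n : ℕ} {s : Finset P} :
    s ∈ lvlF hLF n ↔ IsIdealF s ∧ s.card = n := by
  simp [lvlF, Set.Finite.mem_toFinset]

@[simp] lemma mem_ucovF {hLF : LevelsFinite P} {l ν : Finset P} :
    ν ∈ ucovF hLF l ↔ CoversF l ν := by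
  simp only [ucovF, Finset.mem_filter, mem_lvlF]
  exact ⟨fun h => h.2, fun h => ⟨⟨h.2.1, h.2.2.2⟩, h⟩⟩

/-- Conversion of a tsum over a subtype to a finite sum. -/
lemma tsum_pred_eq_sum {M : Type*} [AddCommMonoid M] [TopologicalSpace M]
    {p : Finset P → Prop} (s : Finset (Finset P)) (hs : ∀ x, p x ↔ x ∈ s)
    (f : Finset P → M) : ∑' x : {x // p x}, f x.1 = ∑ x ∈ s, f x := by
  rw [← Finset.tsum_subtype s f]
  exact Equiv.tsum_eq (Equiv.subtypeEquivRight hs) (fun y : {x // x ∈ s} => f (↑y : Finset P))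

lemma dimRel_zero (κ : Finset P → Finset P → ℝ) (μ l : Finset P) :
    dimRel κ 0 μ l = if μ = l then 1 else 0 := rfl

lemma dimRel_succ (κ : Finset P → Finset P → ℝ) (m : ℕ) (μ l : Finset P) :
    dimRel κ (m + 1) μ l = ∑ x ∈ l, if CoversF (l.erase x) l ∧ μ ⊆ l.erase x
      then κ (l.erase x) l * dimRel κ m μ (l.erase x) else 0 := rfl

lemma dimRel_eq_zero_of_not_subset {κ : Finset P → Finset P → ℝ} {m : ℕ} {μ l : Finset P}
    (h : ¬ μ ⊆ l) : dimRel κ m μ l = 0 := by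
  cases m with
  | zero => rw [dimRel_zero, if_neg]; rintro rfl; exact h (Finset.Subset.refl μ)
  | succ m =>
    rw [dimRel_succ]
    apply Finset.sum_eq_zero
    intro x hx
    rw [if_neg]
    rintro ⟨-, hsub⟩
    exact h (hsub.trans (Finset.erase_subset x l))

lemma dimRel_eq_zero_of_card {κ : Finset P → Finset P → ℝ} {m : ℕ} {μ l : Finset P}
    (h : l.card ≠ μ.card + m) : dimRel κ m μ l = 0 := by
  induction m generalizing l with
  | zero =>
    rw [dimRel_zero, if_neg]; rintro rfl; omega
  | succ m ih =>
    rw [dimRel_succ]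
    apply Finset.sum_eq_zero
    intro x hx
    by_cases hc : CoversF (l.erase x) l ∧ μ ⊆ l.erase x
    · rw [if_pos hc, ih, mul_zero]
      have := hc.1.2.2.2
      omega
    · rw [if_neg hc]

lemma dimI_eq_zero_of_not_subset {κ : Finset P → Finset P → ℝ} {μ l : Finset P}
    (h : ¬ μ ⊆ l) : dimI κ μ l = 0 := dimRel_eq_zero_of_not_subset h

lemma dimI_eq_zero_of_card_lt {κ : Finset P → Finset P → ℝ} {μ l : Finset P}
    (h : l.card < μ.card) : dimI κ μ l = 0 := by
  rw [dimI]
  apply dimRel_eq_zero_of_card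
  omega

@[simp] lemma dimI_self (κ : Finset P → Finset P → ℝ) (μ : Finset P) : dimI κ μ μ = 1 := by
  rw [dimI, Nat.sub_self, dimRel_zero, if_pos rfl]

lemma dimI_eq_ite_of_card_eq {κ : Finset P → Finset P → ℝ} {μ l : Finset P}
    (h : l.card = μ.card) : dimI κ μ l = if μ = l then 1 else 0 := by
  rw [dimI, h, Nat.sub_self, dimRel_zero]

/-- reindexing down-cover sums via erase -/
lemma sum_dcov_eq {M : Type*} [AddCommMonoid M] (l : Finset P) (f : Finset P → M) :
    ∑ ρ ∈ dcovF l, f ρ = ∑ x ∈ l, if CoversF (l.erase x) l then f (l.erase x) else 0 := by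
  rw [← Finset.sum_filter]
  refine (Finset.sum_bij (fun (x : P) (_ : x ∈ l.filter (fun x => CoversF (l.erase x) l)) => l.erase x) ?_ ?_ ?_ ?_).symm
  · intro a ha
    rw [mem_dcovF]
    exact (Finset.mem_filter.mp ha).2
  · intro a ha b hb hab
    have ha' := (Finset.mem_filter.mp ha).1
    have hb' := (Finset.mem_filter.mp hb).1
    by_contra hne
    have : a ∈ l.erase b := Finset.mem_erase.mpr ⟨hne, ha'⟩
    rw [← hab] at this
    exact (Finset.mem_erase.mp this).1 rfl
  · intro ρ hρ
    have hc := mem_dcovF.mp hρ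
    obtain ⟨x, hx, hlx, hsd⟩ := covers_box hc
    have hxl : x ∈ l := hlx ▸ Finset.mem_insert_self x ρ
    have herase : l.erase x = ρ := by
      rw [hlx, Finset.erase_insert hx]
    refine ⟨x, Finset.mem_filter.mpr ⟨hxl, ?_⟩, herase⟩
    rw [herase]; exact hc
  · intro a ha
    rfl

end Aux2
section Aux3

variable {P : Type*} [PartialOrder P]

lemma dimI_down_rec (κ : Finset P → Finset P → ℝ) {μ l : Finset P}
    (h : μ.card < l.card) :
    dimI κ μ l = ∑ ρ ∈ dcovF l, κ ρ l * dimI κ μ ρ := by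
  have hm : l.card - μ.card = (l.card - μ.card - 1) + 1 := by omega
  rw [dimI, hm, dimRel_succ, sum_dcov_eq l (fun ρ => κ ρ l * dimI κ μ ρ)]
  apply Finset.sum_congr rfl
  intro x hx
  by_cases hc : CoversF (l.erase x) l
  · by_cases hsub : μ ⊆ l.erase x
    · rw [if_pos ⟨hc, hsub⟩, if_pos hc, dimI]
      congr 2
      rw [Finset.card_erase_of_mem hx]
      omega
    · rw [if_neg (fun hh => hsub hh.2), if_pos hc, dimI_eq_zero_of_not_subset hsub, mul_zero]
  · rw [if_neg (fun hh => hc hh.1), if_neg hc]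

lemma dimI_eq_of_covers_card {κ : Finset P → Finset P → ℝ} {μ l : Finset P}
    (h : l.card = μ.card + 1) : dimI κ μ l = if CoversF μ l then κ μ l else 0 := by
  rw [dimI_down_rec κ (by omega)]
  have : ∀ ρ ∈ dcovF l, κ ρ l * dimI κ μ ρ = if ρ = μ then κ μ l else 0 := by
    intro ρ hρ
    have hc := mem_dcovF.mp hρ
    have hcard : ρ.card = μ.card := by have := hc.2.2.2; omega
    rw [dimI_eq_ite_of_card_eq hcard]
    by_cases he : ρ = μ
    · subst he; rw [if_pos rfl, if_pos rfl, mul_one]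
    · rw [if_neg (fun hh => he hh.symm), if_neg he, mul_zero]
  rw [Finset.sum_congr rfl this, Finset.sum_ite_eq' (dcovF l) μ (fun _ => κ μ l)]
  by_cases hm : μ ∈ dcovF l
  · rw [if_pos hm, if_pos (mem_dcovF.mp hm)]
  · rw [if_neg hm, if_neg (fun hc => hm (mem_dcovF.mpr hc))]

lemma dimRel_nonneg {κ : Finset P → Finset P → ℝ} (hκ : EdgePositive κ)
    (m : ℕ) (μ l : Finset P) : 0 ≤ dimRel κ m μ l := by
  induction m generalizing l with
  | zero => rw [dimRel_zero]; split <;> norm_num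
  | succ m ih =>
    rw [dimRel_succ]
    apply Finset.sum_nonneg
    intro x hx
    split
    · next hc => exact mul_nonneg (hκ _ _ hc.1).le (ih _)
    · exact le_refl 0
    
lemma dimI_nonneg {κ : Finset P → Finset P → ℝ} (hκ : EdgePositive κ)
    (μ l : Finset P) : 0 ≤ dimI κ μ l := dimRel_nonneg hκ _ μ l

lemma dimT_pos {κ : Finset P → Finset P → ℝ} (hκ : EdgePositive κ) :
    ∀ n : ℕ, ∀ l : Finset P, IsIdealF l → l.card = n → 0 < dimT κ l := by
  intro n
  induction n with
  | zero =>
    intro l hl hcard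
    rw [Finset.card_eq_zero] at hcard
    subst hcard
    rw [dimT, dimI_self]
    norm_num
  | succ n ih =>
    intro l hl hcard
    rw [dimT, dimI_down_rec κ (by simp [hcard])]
    have hne : l.Nonempty := Finset.card_pos.mp (by omega)
    obtain ⟨a, hal, hamax'⟩ := Finset.exists_maximal hne
    have hamax : ∀ x ∈ l, ¬ a < x := fun x hx hlt => hlt.not_ge (hamax' hx hlt.le)
    have hia : IsIdealF (l.erase a) := by
      intro x hx y hy
      have hxl := Finset.mem_erase.mp hx
      have hyl : y ∈ l := hl hxl.2 hy
      refine Finset.mem_erase.mpr ⟨?_, hyl⟩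
      rintro rfl
      exact hamax x hxl.2 (lt_of_le_of_ne hy (fun h => hxl.1 h.symm))
    have hca : CoversF (l.erase a) l := by
      refine ⟨hia, hl, Finset.erase_subset a l, ?_⟩
      rw [Finset.card_erase_of_mem hal]
      omega
    apply Finset.sum_pos'
    · intro ρ hρ
      exact mul_nonneg (hκ _ _ (mem_dcovF.mp hρ)).le (dimI_nonneg hκ _ _)
    · refine ⟨l.erase a, mem_dcovF.mpr hca, mul_pos (hκ _ _ hca) ?_⟩
      exact ih (l.erase a) hia (by rw [Finset.card_erase_of_mem hal]; omega)

lemma dimT_pos' {κ : Finset P → Finset P → ℝ} (hκ : EdgePositive κ)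
    {l : Finset P} (hl : IsIdealF l) : 0 < dimT κ l := dimT_pos hκ l.card l hl rfl

end Aux3
section Aux4

variable {P : Type*} [PartialOrder P]

lemma bx_ofReal (q : P → ℝ) (μ l : Finset P) :
    bx (fun x => ((q x : ℂ)) ^ 2) μ l = ((bx (fun x => q x ^ 2) μ l : ℝ) : ℂ) := by
  simp only [bx]
  push_cast
  rfl

lemma kerov_real {κ : Finset P → Finset P → ℝ} {q : P → ℝ} {t : ℝ}
    (hLF : LevelsFinite P) (hK : KerovCond κ (fun x => ((q x : ℂ)) ^ 2) (t : ℂ))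
    {l : Finset P} (hl : IsIdealF l) :
    (∑ ν ∈ ucovF hLF l, κ l ν ^ 2 * bx (fun x => q x ^ 2) l ν)
      - ∑ ρ ∈ dcovF l, κ ρ l ^ 2 * bx (fun x => q x ^ 2) ρ l
      = 2 * (l.card : ℝ) + t := by
  have h := hK l hl
  rw [tsum_pred_eq_sum (ucovF hLF l) (fun x => mem_ucovF.symm)
      (fun ν => (κ l ν : ℂ) ^ 2 * bx (fun x => ((q x : ℂ)) ^ 2) l ν),
    tsum_pred_eq_sum (dcovF l) (fun x => mem_dcovF.symm)
      (fun μ => (κ μ l : ℂ) ^ 2 * bx (fun x => ((q x : ℂ)) ^ 2) μ l)] at h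
  have hA : ∑ ν ∈ ucovF hLF l, (κ l ν : ℂ) ^ 2 * bx (fun x => ((q x : ℂ)) ^ 2) l ν
      = ((∑ ν ∈ ucovF hLF l, κ l ν ^ 2 * bx (fun x => q x ^ 2) l ν : ℝ) : ℂ) := by
    push_cast
    exact Finset.sum_congr rfl (fun ν _ => by rw [bx_ofReal])
  have hB : ∑ μ ∈ dcovF l, (κ μ l : ℂ) ^ 2 * bx (fun x => ((q x : ℂ)) ^ 2) μ l
      = ((∑ μ ∈ dcovF l, κ μ l ^ 2 * bx (fun x => q x ^ 2) μ l : ℝ) : ℂ) := by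
    push_cast
    exact Finset.sum_congr rfl (fun μ _ => by rw [bx_ofReal])
  rw [hA, hB] at h
  exact_mod_cast h

lemma prod_sq_pos {q : P → ℝ} (hq : ∀ x, 0 < q x) (l : Finset P) :
    0 < ∏ x ∈ l, q x ^ 2 :=
  Finset.prod_pos (fun x _ => pow_pos (hq x) 2)

lemma Mcoh_pos {κ : Finset P → Finset P → ℝ} {q : P → ℝ} {t : ℝ}
    (hκ : EdgePositive κ) (hq : ∀ x, 0 < q x) (ht : 0 < t)
    {l : Finset P} (hl : IsIdealF l) : 0 < Mcoh κ q t l := by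
  rw [Mcoh]
  apply div_pos
  · exact mul_pos (pow_pos (dimT_pos' hκ hl) 2) (prod_sq_pos hq l)
  · exact mul_pos (by exact_mod_cast Nat.factorial_pos l.card) (ascPochhammer_pos _ _ ht)

lemma pUp_eq {κ : Finset P → Finset P → ℝ} {q : P → ℝ} {t : ℝ}
    (hκ : EdgePositive κ) (hq : ∀ x, 0 < q x) (ht : 0 < t)
    {l ν : Finset P} (h : CoversF l ν) :
    pUp κ q t l ν = κ l ν * (dimT κ ν / dimT κ l) * bx (fun x => q x ^ 2) l ν /
      (((l.card : ℝ) + 1) * ((l.card : ℝ) + t)) := by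
  obtain ⟨x, hx, hins, hsd⟩ := covers_box h
  have hbx : bx (fun x => q x ^ 2) l ν = q x ^ 2 := bx_covers _ hsd
  have hprod : ∏ y ∈ ν, q y ^ 2 = q x ^ 2 * ∏ y ∈ l, q y ^ 2 := by
    rw [hins, Finset.prod_insert hx]
  have hcard : ν.card = l.card + 1 := h.2.2.2
  have hfac : (ν.card).factorial = (l.card + 1) * (l.card).factorial := by
    rw [hcard, Nat.factorial_succ]
  have hpoch : Polynomial.eval t (ascPochhammer ℝ ν.card)
      = Polynomial.eval t (ascPochhammer ℝ l.card) * (t + l.card) := by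
    rw [hcard, ascPochhammer_succ_right, Polynomial.eval_mul]
    simp
  have hDl : dimT κ l ≠ 0 := (dimT_pos' hκ h.1).ne'
  have hDν : dimT κ ν ≠ 0 := (dimT_pos' hκ h.2.1).ne'
  have hPl : Polynomial.eval t (ascPochhammer ℝ l.card) ≠ 0 :=
    (ascPochhammer_pos _ _ ht).ne'
  have hfl : ((l.card).factorial : ℝ) ≠ 0 := by exact_mod_cast (Nat.factorial_pos _).ne'
  have hA : (∏ y ∈ l, q y ^ 2) ≠ 0 := (prod_sq_pos hq l).ne'
  have htn : t + (l.card : ℝ) ≠ 0 := by positivity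
  have hn1 : ((l.card : ℝ) + 1) ≠ 0 := by positivity
  rw [pUp, if_pos h, Mcoh, Mcoh, hbx, hprod, hfac, hpoch]
  push_cast
  field_simp
  ring

end Aux4
section Aux5

variable {P : Type*} [PartialOrder P]
variable {κ : Finset P → Finset P → ℝ} {q : P → ℝ} {t : ℝ}

/-- Case `|l| + 1 < |μ|`. -/
lemma keyA (hLF : LevelsFinite P) {μ l : Finset P} (h : l.card + 1 < μ.card) :
    ∑ ν ∈ ucovF hLF l, κ l ν * bx (fun x => q x ^ 2) l ν * dimI κ μ ν
      = (((l.card : ℝ) + 1) * ((l.card : ℝ) + t)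
          - (μ.card : ℝ) * ((μ.card : ℝ) - 1 + t)) * dimI κ μ l
        + ∑ ρ ∈ dcovF μ, κ ρ μ * bx (fun x => q x ^ 2) ρ μ * dimI κ ρ l := by
  rw [dimI_eq_zero_of_card_lt (by omega), mul_zero, zero_add]
  rw [Finset.sum_eq_zero, Finset.sum_eq_zero]
  · intro ρ hρ
    have hc := mem_dcovF.mp hρ
    rw [dimI_eq_zero_of_card_lt (by have := hc.2.2.2; omega), mul_zero]
  · intro ν hν
    have hc := mem_ucovF.mp hν
    rw [dimI_eq_zero_of_card_lt (by have := hc.2.2.2; omega), mul_zero]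

/-- Case `|l| + 1 = |μ|`. -/
lemma keyB (hLF : LevelsFinite P) {μ l : Finset P} (h : l.card + 1 = μ.card) :
    ∑ ν ∈ ucovF hLF l, κ l ν * bx (fun x => q x ^ 2) l ν * dimI κ μ ν
      = (((l.card : ℝ) + 1) * ((l.card : ℝ) + t)
          - (μ.card : ℝ) * ((μ.card : ℝ) - 1 + t)) * dimI κ μ l
        + ∑ ρ ∈ dcovF μ, κ ρ μ * bx (fun x => q x ^ 2) ρ μ * dimI κ ρ l := by
  rw [dimI_eq_zero_of_card_lt (by omega), mul_zero, zero_add]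
  have hL : ∀ ν ∈ ucovF hLF l, κ l ν * bx (fun x => q x ^ 2) l ν * dimI κ μ ν
      = if ν = μ then κ l μ * bx (fun x => q x ^ 2) l μ else 0 := by
    intro ν hν
    have hc := mem_ucovF.mp hν
    rw [dimI_eq_ite_of_card_eq (by have := hc.2.2.2; omega)]
    by_cases he : ν = μ
    · subst he; rw [if_pos rfl, if_pos rfl, mul_one]
    · rw [if_neg (fun hh => he hh.symm), if_neg he, mul_zero]
  have hR : ∀ ρ ∈ dcovF μ, κ ρ μ * bx (fun x => q x ^ 2) ρ μ * dimI κ ρ l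
      = if ρ = l then κ l μ * bx (fun x => q x ^ 2) l μ else 0 := by
    intro ρ hρ
    have hc := mem_dcovF.mp hρ
    rw [dimI_eq_ite_of_card_eq (by have := hc.2.2.2; omega)]
    by_cases he : ρ = l
    · subst he; rw [if_pos rfl, if_pos rfl, mul_one]
    · rw [if_neg he, if_neg he, mul_zero]
  rw [Finset.sum_congr rfl hL, Finset.sum_congr rfl hR,
    Finset.sum_ite_eq' (ucovF hLF l) μ, Finset.sum_ite_eq' (dcovF μ) l]
  by_cases hm : CoversF l μ
  · rw [if_pos (mem_ucovF.mpr hm), if_pos (mem_dcovF.mpr hm)]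
  · rw [if_neg (fun hh => hm (mem_ucovF.mp hh)), if_neg (fun hh => hm (mem_dcovF.mp hh))]

/-- Case `|l| = |μ|`. -/
lemma keyC (hκ : EdgePositive κ) (hLF : LevelsFinite P) (hUD : UDSelfDual κ)
    (hK : KerovCond κ (fun x => ((q x : ℂ)) ^ 2) (t : ℂ))
    {μ l : Finset P} (hμ : IsIdealF μ) (hl : IsIdealF l) (h : l.card = μ.card) :
    ∑ ν ∈ ucovF hLF l, κ l ν * bx (fun x => q x ^ 2) l ν * dimI κ μ ν
      = (((l.card : ℝ) + 1) * ((l.card : ℝ) + t)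
          - (μ.card : ℝ) * ((μ.card : ℝ) - 1 + t)) * dimI κ μ l
        + ∑ ρ ∈ dcovF μ, κ ρ μ * bx (fun x => q x ^ 2) ρ μ * dimI κ ρ l := by
  by_cases he : μ = l
  · subst he
    have hL : ∀ ν ∈ ucovF hLF μ, κ μ ν * bx (fun x => q x ^ 2) μ ν * dimI κ μ ν
        = κ μ ν ^ 2 * bx (fun x => q x ^ 2) μ ν := by
      intro ν hν
      have hc := mem_ucovF.mp hν
      rw [dimI_eq_of_covers_card hc.2.2.2, if_pos hc]
      ring
    have hR : ∀ ρ ∈ dcovF μ, κ ρ μ * bx (fun x => q x ^ 2) ρ μ * dimI κ ρ μ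
        = κ ρ μ ^ 2 * bx (fun x => q x ^ 2) ρ μ := by
      intro ρ hρ
      have hc := mem_dcovF.mp hρ
      rw [dimI_eq_of_covers_card hc.2.2.2, if_pos hc]
      ring
    rw [Finset.sum_congr rfl hL, Finset.sum_congr rfl hR, dimI_self, mul_one]
    have hker := kerov_real hLF hK hμ
    have hco : (((μ.card : ℝ) + 1) * ((μ.card : ℝ) + t)
        - (μ.card : ℝ) * ((μ.card : ℝ) - 1 + t)) = 2 * (μ.card : ℝ) + t := by ring
    rw [hco]
    linarith [hker]
  · -- `μ ≠ l`, same cardinality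
    rw [dimI_eq_ite_of_card_eq h, if_neg he, mul_zero, zero_add]
    have hL : ∀ ν ∈ ucovF hLF l, κ l ν * bx (fun x => q x ^ 2) l ν * dimI κ μ ν
        = if CoversF l ν ∧ CoversF μ ν then κ l ν * bx (fun x => q x ^ 2) l ν * κ μ ν
          else 0 := by
      intro ν hν
      have hc := mem_ucovF.mp hν
      rw [dimI_eq_of_covers_card (by rw [hc.2.2.2, h])]
      by_cases hm : CoversF μ ν
      · rw [if_pos hm, if_pos ⟨hc, hm⟩]
      · rw [if_neg hm, if_neg (fun hh => hm hh.2), mul_zero]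
    have hR : ∀ ρ ∈ dcovF μ, κ ρ μ * bx (fun x => q x ^ 2) ρ μ * dimI κ ρ l
        = if CoversF ρ μ ∧ CoversF ρ l then κ ρ μ * bx (fun x => q x ^ 2) ρ μ * κ ρ l
          else 0 := by
      intro ρ hρ
      have hc := mem_dcovF.mp hρ
      rw [dimI_eq_of_covers_card (by rw [h, hc.2.2.2])]
      by_cases hm : CoversF ρ l
      · rw [if_pos hm, if_pos ⟨hc, hm⟩]
      · rw [if_neg hm, if_neg (fun hh => hm hh.2), mul_zero]
    rw [Finset.sum_congr rfl hL, Finset.sum_congr rfl hR]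
    have hLs : ∑ ν ∈ ucovF hLF l, (if CoversF l ν ∧ CoversF μ ν
        then κ l ν * bx (fun x => q x ^ 2) l ν * κ μ ν else 0)
        = if CoversF l (l ∪ μ) ∧ CoversF μ (l ∪ μ)
          then κ l (l ∪ μ) * bx (fun x => q x ^ 2) l (l ∪ μ) * κ μ (l ∪ μ) else 0 := by
      by_cases hmem : l ∪ μ ∈ ucovF hLF l
      · apply Finset.sum_eq_single_of_mem _ hmem
        intro ν hν hne
        rw [if_neg]
        rintro ⟨h1, h2⟩
        exact hne (quad_down h1 h2 (fun hh => he hh.symm)).2.2.2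
      · rw [if_neg, Finset.sum_eq_zero]
        · intro ν hν
          rw [if_neg]
          rintro ⟨h1, h2⟩
          have : ν = l ∪ μ := (quad_down h1 h2 (fun hh => he hh.symm)).2.2.2
          rw [this] at hν
          exact hmem hν
        · rintro ⟨h1, h2⟩
          exact hmem (mem_ucovF.mpr h1)
    have hRs : ∑ ρ ∈ dcovF μ, (if CoversF ρ μ ∧ CoversF ρ l
        then κ ρ μ * bx (fun x => q x ^ 2) ρ μ * κ ρ l else 0)
        = if CoversF (l ∩ μ) μ ∧ CoversF (l ∩ μ) l
          then κ (l ∩ μ) μ * bx (fun x => q x ^ 2) (l ∩ μ) μ * κ (l ∩ μ) l else 0 := by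
      by_cases hmem : l ∩ μ ∈ dcovF μ
      · apply Finset.sum_eq_single_of_mem _ hmem
        intro ρ hρ hne
        rw [if_neg]
        rintro ⟨h1, h2⟩
        exact hne ((quad_up h2 h1 (fun hh => he hh.symm)).2.2.2).symm
      · rw [if_neg, Finset.sum_eq_zero]
        · intro ρ hρ
          rw [if_neg]
          rintro ⟨h1, h2⟩
          have : l ∩ ρ = ρ := Finset.inter_eq_right.mpr h2.2.2.1
          have h4 : l ∩ μ = ρ := by
            have := (quad_up h2 h1 (fun hh => he hh.symm)).2.2.2
            exact this
          rw [h4] at hmem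
          exact hmem hρ
        · rintro ⟨h1, h2⟩
          exact hmem (mem_dcovF.mpr h1)
    rw [hLs, hRs]
    by_cases hcc : CoversF l (l ∪ μ) ∧ CoversF μ (l ∪ μ)
    · obtain ⟨hq1, hq2, hq3, hq4⟩ := quad_down hcc.1 hcc.2 (fun hh => he hh.symm)
      rw [if_pos hcc, if_pos ⟨hq2, hq1⟩]
      have hud := hUD (l ∩ μ) μ l (l ∪ μ) hq2 hcc.2 hq1 hcc.1 (fun hh => he hh)
      have hbx : bx (fun x => q x ^ 2) l (l ∪ μ) = bx (fun x => q x ^ 2) (l ∩ μ) μ := by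
        rw [bx, bx, ← hq3]
      rw [hbx]
      linear_combination (-(bx (fun x => q x ^ 2) (l ∩ μ) μ)) * hud
    · rw [if_neg hcc, if_neg]
      rintro ⟨h1, h2⟩
      obtain ⟨hu1, hu2, -, -⟩ := quad_up h2 h1 (fun hh => he hh.symm)
      exact hcc ⟨hu1, hu2⟩

end Aux5
section Aux6

variable {P : Type*} [PartialOrder P]
variable {κ : Finset P → Finset P → ℝ} {q : P → ℝ} {t : ℝ}

lemma T2_reindex (hLF : LevelsFinite P) (hUD : UDSelfDual κ) (μ l : Finset P) :
    ∑ ν ∈ ucovF hLF l, ∑ lam ∈ (dcovF ν).erase l,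
        κ l ν * bx (fun x => q x ^ 2) l ν * (κ lam ν * dimI κ μ lam)
      = ∑ μ0 ∈ dcovF l, ∑ lam ∈ (ucovF hLF μ0).erase l,
        κ μ0 l * (κ μ0 lam * bx (fun x => q x ^ 2) μ0 lam * dimI κ μ lam) := by
  rw [Finset.sum_sigma', Finset.sum_sigma']
  refine Finset.sum_nbij' (fun p => ⟨l ∩ p.2, p.2⟩) (fun p => ⟨l ∪ p.2, p.2⟩)
    ?_ ?_ ?_ ?_ ?_
  · rintro ⟨ν, lam⟩ hp
    rw [Finset.mem_sigma, Finset.mem_erase] at hp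
    have hc1 := mem_ucovF.mp hp.1
    have hc2 := mem_dcovF.mp hp.2.2
    obtain ⟨hq1, hq2, hq3, hq4⟩ := quad_down hc1 hc2 (fun hh => hp.2.1 hh.symm)
    rw [Finset.mem_sigma, Finset.mem_erase]
    exact ⟨mem_dcovF.mpr hq1, hp.2.1, mem_ucovF.mpr hq2⟩
  · rintro ⟨μ0, lam⟩ hp
    rw [Finset.mem_sigma, Finset.mem_erase] at hp
    have hc1 := mem_dcovF.mp hp.1
    have hc2 := mem_ucovF.mp hp.2.2
    obtain ⟨hu1, hu2, hu3, hu4⟩ := quad_up hc1 hc2 (fun hh => hp.2.1 hh.symm)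
    rw [Finset.mem_sigma, Finset.mem_erase]
    exact ⟨mem_ucovF.mpr hu1, hp.2.1, mem_dcovF.mpr hu2⟩
  · rintro ⟨ν, lam⟩ hp
    rw [Finset.mem_sigma, Finset.mem_erase] at hp
    have hc1 := mem_ucovF.mp hp.1
    have hc2 := mem_dcovF.mp hp.2.2
    have h4 := (quad_down hc1 hc2 (fun hh => hp.2.1 hh.symm)).2.2.2
    simp only [Sigma.mk.inj_iff, heq_eq_eq, and_true]
    exact h4.symm
  · rintro ⟨μ0, lam⟩ hp
    rw [Finset.mem_sigma, Finset.mem_erase] at hp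
    have hc1 := mem_dcovF.mp hp.1
    have hc2 := mem_ucovF.mp hp.2.2
    have h4 := (quad_up hc1 hc2 (fun hh => hp.2.1 hh.symm)).2.2.2
    simp only [Sigma.mk.inj_iff, heq_eq_eq, and_true]
    exact h4
  · rintro ⟨ν, lam⟩ hp
    rw [Finset.mem_sigma, Finset.mem_erase] at hp
    have hc1 := mem_ucovF.mp hp.1
    have hc2 := mem_dcovF.mp hp.2.2
    obtain ⟨hq1, hq2, hq3, hq4⟩ := quad_down hc1 hc2 (fun hh => hp.2.1 hh.symm)
    have hud := hUD (l ∩ lam) lam l ν hq2 hc2 hq1 hc1 hp.2.1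
    have hbx : bx (fun x => q x ^ 2) l ν = bx (fun x => q x ^ 2) (l ∩ lam) lam := by
      rw [bx, bx, hq3]
    simp only
    rw [hbx]
    linear_combination (-(dimI κ μ lam * bx (fun x => q x ^ 2) (l ∩ lam) lam)) * hud

lemma keyS (hκ : EdgePositive κ) (hLF : LevelsFinite P) (hUD : UDSelfDual κ)
    (hK : KerovCond κ (fun x => ((q x : ℂ)) ^ 2) (t : ℂ)) :
    ∀ n : ℕ, ∀ μ l : Finset P, IsIdealF μ → IsIdealF l → l.card = n →
    ∑ ν ∈ ucovF hLF l, κ l ν * bx (fun x => q x ^ 2) l ν * dimI κ μ ν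
      = (((l.card : ℝ) + 1) * ((l.card : ℝ) + t)
          - (μ.card : ℝ) * ((μ.card : ℝ) - 1 + t)) * dimI κ μ l
        + ∑ ρ ∈ dcovF μ, κ ρ μ * bx (fun x => q x ^ 2) ρ μ * dimI κ ρ l := by
  intro n
  induction n with
  | zero =>
    intro μ l hμ hl hcard
    rcases Nat.lt_trichotomy (l.card) μ.card with h | h | h
    · by_cases h2 : l.card + 1 = μ.card
      · exact keyB hLF h2
      · exact keyA hLF (by omega)
    · exact keyC hκ hLF hUD hK hμ hl h
    · omega
  | succ n ih =>
    intro μ l hμ hl hcard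
    rcases Nat.lt_trichotomy (l.card) μ.card with h | h | h
    · by_cases h2 : l.card + 1 = μ.card
      · exact keyB hLF h2
      · exact keyA hLF (by omega)
    · exact keyC hκ hLF hUD hK hμ hl h
    · -- main inductive step: μ.card < l.card = n + 1
      have hstep1 : ∀ ν ∈ ucovF hLF l,
          κ l ν * bx (fun x => q x ^ 2) l ν * dimI κ μ ν
            = (κ l ν * bx (fun x => q x ^ 2) l ν * (κ l ν * dimI κ μ l))
              + ∑ lam ∈ (dcovF ν).erase l,
                  κ l ν * bx (fun x => q x ^ 2) l ν * (κ lam ν * dimI κ μ lam) := by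
        intro ν hν
        have hc := mem_ucovF.mp hν
        rw [dimI_down_rec κ (show μ.card < ν.card by rw [hc.2.2.2]; omega), Finset.mul_sum,
          ← Finset.add_sum_erase _ _ (mem_dcovF.mpr hc)]
      rw [Finset.sum_congr rfl hstep1, Finset.sum_add_distrib, T2_reindex hLF hUD μ l]
      have hstep2 : ∀ μ0 ∈ dcovF l,
          ∑ lam ∈ (ucovF hLF μ0).erase l,
              κ μ0 l * (κ μ0 lam * bx (fun x => q x ^ 2) μ0 lam * dimI κ μ lam)
            = κ μ0 l * ((((n : ℝ) + 1) * ((n : ℝ) + t)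
                  - (μ.card : ℝ) * ((μ.card : ℝ) - 1 + t)) * dimI κ μ μ0
                + ∑ ρ ∈ dcovF μ, κ ρ μ * bx (fun x => q x ^ 2) ρ μ * dimI κ ρ μ0)
              - κ μ0 l * (κ μ0 l * bx (fun x => q x ^ 2) μ0 l * dimI κ μ l) := by
        intro μ0 hμ0
        have hc := mem_dcovF.mp hμ0
        have hcard0 : μ0.card = n := by have := hc.2.2.2; omega
        rw [← Finset.mul_sum]
        have herase : ∑ lam ∈ (ucovF hLF μ0).erase l,
            (κ μ0 lam * bx (fun x => q x ^ 2) μ0 lam * dimI κ μ lam)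
            = (∑ lam ∈ ucovF hLF μ0,
                κ μ0 lam * bx (fun x => q x ^ 2) μ0 lam * dimI κ μ lam)
              - κ μ0 l * bx (fun x => q x ^ 2) μ0 l * dimI κ μ l := by
          rw [← Finset.add_sum_erase _ _ (mem_ucovF.mpr hc)]
          ring
        rw [herase, ih μ μ0 hμ hc.1 hcard0, hcard0]
        ring
      rw [Finset.sum_congr rfl hstep2, Finset.sum_sub_distrib]
      have hup : ∑ ν ∈ ucovF hLF l, κ l ν * bx (fun x => q x ^ 2) l ν * (κ l ν * dimI κ μ l)
          = dimI κ μ l * ∑ ν ∈ ucovF hLF l, κ l ν ^ 2 * bx (fun x => q x ^ 2) l ν := by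
        rw [Finset.mul_sum]
        exact Finset.sum_congr rfl (fun ν _ => by ring)
      have hdown : ∑ μ0 ∈ dcovF l, κ μ0 l * (κ μ0 l * bx (fun x => q x ^ 2) μ0 l * dimI κ μ l)
          = dimI κ μ l * ∑ μ0 ∈ dcovF l, κ μ0 l ^ 2 * bx (fun x => q x ^ 2) μ0 l := by
        rw [Finset.mul_sum]
        exact Finset.sum_congr rfl (fun μ0 _ => by ring)
      have hmid : ∑ μ0 ∈ dcovF l, κ μ0 l * ((((n : ℝ) + 1) * ((n : ℝ) + t)
              - (μ.card : ℝ) * ((μ.card : ℝ) - 1 + t)) * dimI κ μ μ0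
            + ∑ ρ ∈ dcovF μ, κ ρ μ * bx (fun x => q x ^ 2) ρ μ * dimI κ ρ μ0)
          = (((n : ℝ) + 1) * ((n : ℝ) + t)
              - (μ.card : ℝ) * ((μ.card : ℝ) - 1 + t)) * dimI κ μ l
            + ∑ ρ ∈ dcovF μ, κ ρ μ * bx (fun x => q x ^ 2) ρ μ * dimI κ ρ l := by
        have hexp : ∀ μ0 ∈ dcovF l, κ μ0 l * ((((n : ℝ) + 1) * ((n : ℝ) + t)
                - (μ.card : ℝ) * ((μ.card : ℝ) - 1 + t)) * dimI κ μ μ0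
              + ∑ ρ ∈ dcovF μ, κ ρ μ * bx (fun x => q x ^ 2) ρ μ * dimI κ ρ μ0)
            = (((n : ℝ) + 1) * ((n : ℝ) + t)
                - (μ.card : ℝ) * ((μ.card : ℝ) - 1 + t)) * (κ μ0 l * dimI κ μ μ0)
              + ∑ ρ ∈ dcovF μ, κ ρ μ * bx (fun x => q x ^ 2) ρ μ * (κ μ0 l * dimI κ ρ μ0) := by
          intro μ0 _
          rw [mul_add, Finset.mul_sum]
          congr 1
          · ring
          · exact Finset.sum_congr rfl (fun ρ _ => by ring)
        rw [Finset.sum_congr rfl hexp, Finset.sum_add_distrib, ← Finset.mul_sum,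
          ← dimI_down_rec κ h, Finset.sum_comm]
        congr 1
        apply Finset.sum_congr rfl
        intro ρ hρ
        have hcρ := mem_dcovF.mp hρ
        rw [← Finset.mul_sum, ← dimI_down_rec κ (show ρ.card < l.card by
          have := hcρ.2.2.2; omega)]
      rw [hup, hdown, hmid]
      have hker := kerov_real hLF hK hl
      have hnc : (l.card : ℝ) = (n : ℝ) + 1 := by rw [hcard]; push_cast; ring
      rw [hnc] at hker ⊢
      have hker' : ∑ ν ∈ ucovF hLF l, κ l ν ^ 2 * bx (fun x => q x ^ 2) l ν
          = 2 * ((n : ℝ) + 1) + t + ∑ ρ ∈ dcovF l, κ ρ l ^ 2 * bx (fun x => q x ^ 2) ρ l := by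
        linarith [hker]
      rw [hker']
      ring

end Aux6
section Aux7

variable {P : Type*} [PartialOrder P]
variable {κ : Finset P → Finset P → ℝ} {q : P → ℝ} {t : ℝ}

lemma bx_sq {ρ μ : Finset P} (h : CoversF ρ μ) :
    (bx q ρ μ) ^ 2 = bx (fun x => q x ^ 2) ρ μ := by
  obtain ⟨x, -, -, hsd⟩ := covers_box h
  rw [bx_covers q hsd, bx_covers (fun x => q x ^ 2) hsd]

lemma descF_shift (n k : ℕ) (hk : 1 ≤ k) :
    (n.descFactorial k : ℝ) = ((n : ℝ) + 1 - k) * (n.descFactorial (k - 1) : ℝ) := by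
  obtain ⟨k', rfl⟩ : ∃ k', k = k' + 1 := ⟨k - 1, by omega⟩
  rw [Nat.descFactorial_succ, Nat.add_sub_cancel]
  by_cases h : k' ≤ n
  · rw [Nat.cast_mul, Nat.cast_sub h]
    push_cast
    ring
  · have h1 : n.descFactorial k' = 0 := Nat.descFactorial_eq_zero_iff_lt.mpr (by omega)
    have h2 : n - k' = 0 := by omega
    rw [h1, h2]
    simp

lemma stepDown (hκ : EdgePositive κ) (hLF : LevelsFinite P)
    {μ ν : Finset P} (hν : IsIdealF ν) {n : ℕ} (hn : ν.card = n + 1) :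
    ∑ l' ∈ lvlF hLF n, pDown κ ν l' * Pstar κ μ l'
      = (n.descFactorial μ.card : ℝ) * dimI κ μ ν / dimT κ ν := by
  have hsub : dcovF ν ⊆ lvlF hLF n := by
    intro l' h
    have hc := mem_dcovF.mp h
    exact mem_lvlF.mpr ⟨hc.1, by have := hc.2.2.2; omega⟩
  rw [← Finset.sum_subset hsub (fun l' _ h2 => by
    rw [pDown, if_neg (fun hc => h2 (mem_dcovF.mpr hc)), zero_mul])]
  have hterm : ∀ l' ∈ dcovF ν, pDown κ ν l' * Pstar κ μ l'
      = (n.descFactorial μ.card : ℝ) * (κ l' ν * dimI κ μ l') / dimT κ ν := by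
    intro l' hl'
    have hc := mem_dcovF.mp hl'
    have hcard' : l'.card = n := by have := hc.2.2.2; omega
    have hD : dimT κ l' ≠ 0 := (dimT_pos' hκ hc.1).ne'
    have hDν : dimT κ ν ≠ 0 := (dimT_pos' hκ hc.2.1).ne'
    rw [pDown, if_pos hc, Pstar, hcard']
    field_simp [hD, hDν]
  rw [Finset.sum_congr rfl hterm, ← Finset.sum_div, ← Finset.mul_sum]
  congr 1
  by_cases hk : μ.card ≤ n
  · rw [← dimI_down_rec κ (by omega)]
  · have h0 : n.descFactorial μ.card = 0 :=
      Nat.descFactorial_eq_zero_iff_lt.mpr (by omega)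
    rw [h0]
    simp

end Aux7
/-- the explicit action of the up/down Markov transition operator `T_n` on the
relative dimension functions `P*_μ`. -/
theorem statement9 {P : Type*} [PartialOrder P]
    (κ : Finset P → Finset P → ℝ) (q : P → ℝ) (t : ℝ)
    (hκ : EdgePositive κ) (hq : ∀ x : P, 0 < q x) (ht : 0 < t)
    (hLF : LevelsFinite P) (hUD : UDSelfDual κ)
    (hK : KerovCond κ (fun x => ((q x : ℂ)) ^ 2) (t : ℂ)) :
    ∀ μ : Finset P, IsIdealF μ → ∀ n : ℕ, ∀ l : Finset P, IsIdealF l → l.card = n →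
      (∑' l' : Lvl P n, TnMat κ q t l l'.1 * Pstar κ μ l'.1) - Pstar κ μ l
        = -(((μ.card : ℝ) * ((μ.card : ℝ) - 1 + t)) / (((n : ℝ) + 1) * ((n : ℝ) + t))) *
              Pstar κ μ l
          + (((n : ℝ) + 1 - (μ.card : ℝ)) / (((n : ℝ) + 1) * ((n : ℝ) + t))) *
              ∑' ρ : {ρ : Finset P // CoversF ρ μ},
                κ ρ.1 μ * (bx q ρ.1 μ) ^ 2 * Pstar κ ρ.1 l := by
  intro μ hμ n l hl hln
  subst hln
  have hDl : 0 < dimT κ l := dimT_pos' hκ hl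
  have hE1 : ((l.card : ℝ) + 1) ≠ 0 := by positivity
  have hE2 : ((l.card : ℝ) + t) ≠ 0 := by positivity
  -- convert the tsums to finite sums
  rw [tsum_pred_eq_sum (lvlF hLF l.card) (fun x => mem_lvlF.symm)
      (fun l' => TnMat κ q t l l' * Pstar κ μ l'),
    tsum_pred_eq_sum (dcovF μ) (fun x => mem_dcovF.symm)
      (fun ρ => κ ρ μ * (bx q ρ μ) ^ 2 * Pstar κ ρ l)]
  -- notation
  set S : ℝ := ∑ ρ ∈ dcovF μ, κ ρ μ * bx (fun x => q x ^ 2) ρ μ * dimI κ ρ l with hS_def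
  -- compute the main sum
  have hTn : ∀ l' : Finset P, TnMat κ q t l l'
      = ∑ ν ∈ lvlF hLF (l.card + 1), pUp κ q t l ν * pDown κ ν l' := by
    intro l'
    exact tsum_pred_eq_sum (lvlF hLF (l.card + 1)) (fun x => mem_lvlF.symm)
      (fun ν => pUp κ q t l ν * pDown κ ν l')
  have hmain : ∑ l' ∈ lvlF hLF l.card, TnMat κ q t l l' * Pstar κ μ l'
      = (l.card.descFactorial μ.card : ℝ)
          * ((((l.card : ℝ) + 1) * ((l.card : ℝ) + t)
              - (μ.card : ℝ) * ((μ.card : ℝ) - 1 + t)) * dimI κ μ l + S)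
          / (((l.card : ℝ) + 1) * ((l.card : ℝ) + t) * dimT κ l) := by
    have h1 : ∀ l' ∈ lvlF hLF l.card, TnMat κ q t l l' * Pstar κ μ l'
        = ∑ ν ∈ lvlF hLF (l.card + 1), pUp κ q t l ν * (pDown κ ν l' * Pstar κ μ l') := by
      intro l' _
      rw [hTn l', Finset.sum_mul]
      exact Finset.sum_congr rfl (fun ν _ => by rw [mul_assoc])
    rw [Finset.sum_congr rfl h1, Finset.sum_comm]
    have h2 : ∀ ν ∈ lvlF hLF (l.card + 1),
        ∑ l' ∈ lvlF hLF l.card, pUp κ q t l ν * (pDown κ ν l' * Pstar κ μ l')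
        = pUp κ q t l ν * ((l.card.descFactorial μ.card : ℝ) * dimI κ μ ν / dimT κ ν) := by
      intro ν hν
      have hmem := mem_lvlF.mp hν
      rw [← Finset.mul_sum, stepDown hκ hLF hmem.1 hmem.2]
    rw [Finset.sum_congr rfl h2]
    have hsub : ucovF hLF l ⊆ lvlF hLF (l.card + 1) := by
      intro ν h
      have hc := mem_ucovF.mp h
      exact mem_lvlF.mpr ⟨hc.2.1, hc.2.2.2⟩
    rw [← Finset.sum_subset hsub (fun ν _ h2 => by
      rw [pUp, if_neg (fun hc => h2 (mem_ucovF.mpr hc)), zero_mul])]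
    have h3 : ∀ ν ∈ ucovF hLF l,
        pUp κ q t l ν * ((l.card.descFactorial μ.card : ℝ) * dimI κ μ ν / dimT κ ν)
        = (l.card.descFactorial μ.card : ℝ)
            * (κ l ν * bx (fun x => q x ^ 2) l ν * dimI κ μ ν)
            / (((l.card : ℝ) + 1) * ((l.card : ℝ) + t) * dimT κ l) := by
      intro ν hν
      have hc := mem_ucovF.mp hν
      have hDν : dimT κ ν ≠ 0 := (dimT_pos' hκ hc.2.1).ne'
      rw [pUp_eq hκ hq ht hc]
      field_simp [hDν, hDl.ne']
    rw [Finset.sum_congr rfl h3, ← Finset.sum_div, ← Finset.mul_sum,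
      keyS hκ hLF hUD hK l.card μ l hμ hl rfl]
  rw [hmain]
  -- rewrite the RHS sum
  have hRsum : ∑ ρ ∈ dcovF μ, κ ρ μ * (bx q ρ μ) ^ 2 * Pstar κ ρ l
      = (l.card.descFactorial (μ.card - 1) : ℝ) * S / dimT κ l := by
    have hterm : ∀ ρ ∈ dcovF μ, κ ρ μ * (bx q ρ μ) ^ 2 * Pstar κ ρ l
        = (l.card.descFactorial (μ.card - 1) : ℝ)
            * (κ ρ μ * bx (fun x => q x ^ 2) ρ μ * dimI κ ρ l) / dimT κ l := by
      intro ρ hρ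
      have hc := mem_dcovF.mp hρ
      rw [bx_sq hc, Pstar, show ρ.card = μ.card - 1 from by have := hc.2.2.2; omega]
      ring
    rw [Finset.sum_congr rfl hterm, ← Finset.sum_div, ← Finset.mul_sum, hS_def]
  rw [hRsum, Pstar]
  -- the descFactorial identity
  have hS_shift : ((l.card : ℝ) + 1 - (μ.card : ℝ))
      * ((l.card.descFactorial (μ.card - 1) : ℝ) * S)
      = (l.card.descFactorial μ.card : ℝ) * S := by
    by_cases hk0 : μ.card = 0
    · have hempty : dcovF μ = ∅ := by
        apply Finset.eq_empty_of_forall_notMem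
        intro ρ hρ
        have hc := mem_dcovF.mp hρ
        have := hc.2.2.2
        omega
      have hS0 : S = 0 := by rw [hS_def, hempty, Finset.sum_empty]
      rw [hS0, mul_zero, mul_zero, mul_zero]
    · rw [descF_shift l.card μ.card (by omega)]
      ring
  -- final algebra
  have hgoal2 : (((l.card : ℝ) + 1 - (μ.card : ℝ))
        / (((l.card : ℝ) + 1) * ((l.card : ℝ) + t)))
        * ((l.card.descFactorial (μ.card - 1) : ℝ) * S / dimT κ l)
      = (l.card.descFactorial μ.card : ℝ) * S
          / (((l.card : ℝ) + 1) * ((l.card : ℝ) + t) * dimT κ l) := by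
    rw [div_mul_div_comm, hS_shift]
  rw [hgoal2]
  field_simp [hDl.ne', hE1, hE2]
  ring

end IdealGraph
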